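/- The unital associative algebra generated by I and T2 subject to the relations I^2 T2 - (q+q^{-1}) I T2 I + T2 I^2 = -T2 and I T2^2 - (q+q^{-1}) T2 I T2 + T2^2 I = 0, with T1 defined as T1 := q^{1/2}IT2 - q^{-1/2}T2I, satisfies all three defining relations of U_q(iso_2): [I,T2]_q = T1, [T1,I]_q = T2, and [T2,T1]_q = 0. -/
import Mathlib


/-- In any unital associative ℂ-algebra generated by elements I, T2
satisfying the relations I²T2 - (q+q⁻¹)IT2I + T2I² = -T2 and
IT2² - (q+q⁻¹)T2IT2 + T2²I = 0, setting T1 := q^{1/2}IT2 - q^{-1/2}T2I, all three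
defining relations of U_q(iso₂) hold. -/
theorem stmt2 (q sq : ℂ) (hq : q ≠ 0) (hsq : sq ^ 2 = q)
    (A : Type*) [Ring A] [Algebra ℂ A] (I T2 : A)
    (h4 : I ^ 2 * T2 - (q + q⁻¹) • (I * T2 * I) + T2 * I ^ 2 = -T2)
    (h5 : I * T2 ^ 2 - (q + q⁻¹) • (T2 * I * T2) + T2 ^ 2 * I = 0) :
    let T1 := sq • (I * T2) - sq⁻¹ • (T2 * I)
    sq • (I * T2) - sq⁻¹ • (T2 * I) = T1 ∧
    sq • (T1 * I) - sq⁻¹ • (I * T1) = T2 ∧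
    sq • (T2 * T1) - sq⁻¹ • (T1 * T2) = 0 := by
  intro T1
  have hs : sq ≠ 0 := by
    intro h; apply hq; rw [← hsq, h]; ring
  have hss : sq * sq = q := by rw [← hsq]; ring
  have hsi : sq * sq⁻¹ = 1 := mul_inv_cancel₀ hs
  have hsi' : sq⁻¹ * sq = 1 := inv_mul_cancel₀ hs
  have hii : sq⁻¹ * sq⁻¹ = q⁻¹ := by
    rw [← mul_inv, hss]
  refine ⟨rfl, ?_, ?_⟩
  · show sq • ((sq • (I * T2) - sq⁻¹ • (T2 * I)) * I)
      - sq⁻¹ • (I * (sq • (I * T2) - sq⁻¹ • (T2 * I))) = T2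
    have e1 : I * (I * T2) = I ^ 2 * T2 := by noncomm_ring
    have e2 : T2 * I * I = T2 * I ^ 2 := by noncomm_ring
    have e3 : I * (T2 * I) = I * T2 * I := by noncomm_ring
    simp only [sub_mul, mul_sub, smul_mul_assoc, mul_smul_comm, smul_sub, smul_smul,
      hss, hsi, hsi', hii, one_smul, e1, e2, e3]
    have h4' : (q + q⁻¹) • (I * T2 * I) = I ^ 2 * T2 + T2 * I ^ 2 + T2 := by
      have := h4
      linear_combination (norm := module) -h4
    have : q • (I * T2 * I) + q⁻¹ • (I * T2 * I) = I ^ 2 * T2 + T2 * I ^ 2 + T2 := by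
      rw [← add_smul]; exact h4'
    linear_combination (norm := module) this
  · show sq • (T2 * (sq • (I * T2) - sq⁻¹ • (T2 * I)))
      - sq⁻¹ • ((sq • (I * T2) - sq⁻¹ • (T2 * I)) * T2) = 0
    have e1 : T2 * (I * T2) = T2 * I * T2 := by noncomm_ring
    have e2 : T2 * (T2 * I) = T2 ^ 2 * I := by noncomm_ring
    have e3 : I * T2 * T2 = I * T2 ^ 2 := by noncomm_ring
    have e4 : T2 * I * T2 = T2 * I * T2 := rfl
    simp only [sub_mul, mul_sub, smul_mul_assoc, mul_smul_comm, smul_sub, smul_smul,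
      hss, hsi, hsi', hii, one_smul, e1, e2, e3]
    have h5' : q • (T2 * I * T2) + q⁻¹ • (T2 * I * T2) = I * T2 ^ 2 + T2 ^ 2 * I := by
      rw [← add_smul]
      linear_combination (norm := module) -h5
    linear_combination (norm := module) h5'
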